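/- Let N ≥ 1 be an integer and let m ≥ 1 be an odd integer. Then Tr(Σ_{i₁,…,i_m=1}^N X_{i₁ i₂} X_{i₂ i₃} ⋯ X_{i_{m−1} i_m} X_{i_m i₁}) = (N−1)^m + 1 − N. Equivalently, the value of the so(N) weight system in the standard representation on the standard cycle (1,2,…,m) equals ((N−1)^m + 1 − N)/N. -/

import Mathlib

open Matrix

/-- The standard generators `X_{ij} = E_{ij} - E_{N+1-j, N+1-i}` of `so(N)`,
as `N × N` matrices over `ℚ` (indices zero-based, so `N+1-i` becomes `Fin.rev i`). -/
noncomputable def soGen (N : ℕ) (i j : Fin N) : Matrix (Fin N) (Fin N) ℚ :=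
  Matrix.single i j 1 - Matrix.single j.rev i.rev 1

/-- `W_N(α) = Tr (Σ_{i₁,…,i_m} X_{i₁ i_{α(1)}} ⋯ X_{i_m i_{α(m)}})`,
the (un-normalized) standard-representation so(N) weight of a permutation
`α` of `{1,…,m}`; the product is taken in order of increasing position. -/
noncomputable def soWeight (N m : ℕ) (α : Equiv.Perm (Fin m)) : ℚ :=
  Matrix.trace (∑ i : Fin m → Fin N,
    ((List.finRange m).map fun k => soGen N (i k) (i (α k))).prod)

def Pm (N : ℕ) : Matrix (Fin N × Fin N) (Fin N × Fin N) ℚ :=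
  fun x y => (if x.1 = x.2 then 1 else 0) * (if y.1 = y.2 then 1 else 0)

def Qm (N : ℕ) : Matrix (Fin N × Fin N) (Fin N × Fin N) ℚ :=
  fun x y => if y = (x.2.rev, x.1.rev) then 1 else 0

noncomputable def Mm (N : ℕ) : Matrix (Fin N × Fin N) (Fin N × Fin N) ℚ :=
  Pm N - Qm N

lemma Qm_apply_symm (N : ℕ) (x y : Fin N × Fin N) :
    Qm N x y = if x = (y.2.rev, y.1.rev) then 1 else 0 := by
  simp only [Qm, Prod.ext_iff]
  refine if_congr ⟨?_, ?_⟩ rfl rfl <;>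
  · rintro ⟨h1, h2⟩
    exact ⟨by rw [h2, Fin.rev_rev], by rw [h1, Fin.rev_rev]⟩

lemma Mm_apply (N : ℕ) (p a q b : Fin N) :
    Mm N (p, a) (q, b) = soGen N a b p q := by
  simp only [Mm, Pm, Qm, soGen, Matrix.sub_apply, Matrix.single, Matrix.of_apply,
    Prod.mk.injEq]
  congr 1
  · by_cases h1 : p = a <;> by_cases h2 : q = b <;> simp_all [eq_comm]
  · refine if_congr ⟨?_, ?_⟩ rfl rfl
    · rintro ⟨h1, h2⟩; exact ⟨by rw [h2, Fin.rev_rev], h1.symm⟩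
    · rintro ⟨h1, h2⟩; exact ⟨h2.symm, by rw [← h1, Fin.rev_rev]⟩

lemma diag_count (N : ℕ) :
    ∑ x : Fin N × Fin N, (if x.1 = x.2 then (1:ℚ) else 0) = N := by
  rw [Fintype.sum_prod_type]
  simp [Finset.sum_ite_eq]

lemma PP (N : ℕ) : Pm N * Pm N = (N : ℚ) • Pm N := by
  ext x z
  simp only [Matrix.mul_apply, Pm, Matrix.smul_apply, smul_eq_mul]
  have : ∀ y : Fin N × Fin N,
      ((if x.1 = x.2 then (1:ℚ) else 0) * (if y.1 = y.2 then 1 else 0)) *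
        ((if y.1 = y.2 then (1:ℚ) else 0) * (if z.1 = z.2 then 1 else 0)) =
      (if y.1 = y.2 then (1:ℚ) else 0) *
        ((if x.1 = x.2 then (1:ℚ) else 0) * (if z.1 = z.2 then 1 else 0)) := by
    intro y; by_cases h : y.1 = y.2 <;> simp [h]
  rw [Finset.sum_congr rfl fun y _ => this y, ← Finset.sum_mul, diag_count]

lemma QQ (N : ℕ) : Qm N * Qm N = 1 := by
  ext x z
  simp only [Matrix.mul_apply, Qm, boole_mul]
  rw [Finset.sum_ite_eq']
  simp [Fin.rev_rev, eq_comm, Matrix.one_apply]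

lemma QP (N : ℕ) : Qm N * Pm N = Pm N := by
  ext x z
  simp only [Matrix.mul_apply, Qm, boole_mul]
  rw [Finset.sum_ite_eq']
  simp only [Finset.mem_univ, if_true, Pm]
  by_cases h : x.1 = x.2 <;> simp [h, Fin.rev_eq_iff, eq_comm]

lemma PQ (N : ℕ) : Pm N * Qm N = Pm N := by
  ext x z
  simp only [Matrix.mul_apply, Qm_apply_symm, mul_boole]
  rw [Finset.sum_ite_eq']
  simp only [Finset.mem_univ, if_true, Pm]
  by_cases h : z.1 = z.2 <;> simp [h, Fin.rev_eq_iff, eq_comm]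

lemma traceP (N : ℕ) : Matrix.trace (Pm N) = (N : ℚ) := by
  have := diag_count N
  simp only [Matrix.trace, Matrix.diag, Pm]
  rw [← this]
  congr 1; ext x; by_cases h : x.1 = x.2 <;> simp [h]

lemma traceQ (N : ℕ) : Matrix.trace (Qm N) = (N : ℚ) := by
  have key : ∀ p a : Fin N, ((p, a) = (a.rev, p.rev)) ↔ a = p.rev := by
    intro p a
    constructor
    · intro h; exact (Prod.ext_iff.1 h).2
    · intro h; subst h; simp [Prod.ext_iff, Fin.rev_rev]
  simp only [Matrix.trace, Matrix.diag, Qm]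
  rw [Fintype.sum_prod_type]
  simp [key, Finset.sum_ite_eq']
lemma Mm_sq (N : ℕ) : Mm N * Mm N = ((N : ℚ) - 2) • Pm N + 1 := by
  have : Mm N * Mm N = Pm N * Pm N - Qm N * Pm N - (Pm N * Qm N - Qm N * Qm N) := by
    simp only [Mm, Matrix.sub_mul, Matrix.mul_sub]
  rw [this, PP, PQ, QP, QQ]
  have hsmul : ((N : ℚ) - 2) • Pm N = (N : ℚ) • Pm N - Pm N - Pm N := by
    rw [sub_smul, two_smul]; abel
  rw [hsmul]; abel

lemma Mm_sq_pow (N : ℕ) (hN : 1 ≤ N) (k : ℕ) :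
    (Mm N * Mm N) ^ k = 1 + ((((N : ℚ) - 1) ^ (2 * k) - 1) / N) • Pm N := by
  have hN0 : (N : ℚ) ≠ 0 := by positivity
  induction k with
  | zero => simp
  | succ k ih =>
    rw [pow_succ, ih, Mm_sq]
    set c : ℚ := (((N : ℚ) - 1) ^ (2 * k) - 1) / N with hc
    have expand : (1 + c • Pm N) * (((N : ℚ) - 2) • Pm N + 1)
        = 1 + (c + ((N : ℚ) - 2) + c * ((N : ℚ) - 2) * N) • Pm N := by
      rw [add_mul, mul_add, mul_add, one_mul, mul_one, Matrix.smul_mul, Matrix.mul_smul,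
        PP]
      rw [smul_smul, smul_smul, mul_one]
      rw [add_smul, add_smul]
      abel
    rw [expand]
    congr 1
    congr 1
    rw [hc]
    field_simp
    ring
lemma trace_Mm_odd (N : ℕ) (hN : 1 ≤ N) (k : ℕ) :
    Matrix.trace (Mm N ^ (2 * k + 1)) = ((N : ℚ) - 1) ^ (2 * k + 1) + 1 - N := by
  have hN0 : (N : ℚ) ≠ 0 := by positivity
  have h1 : Mm N ^ (2 * k + 1) = (Mm N * Mm N) ^ k * Mm N := by
    rw [pow_succ, pow_mul, pow_two]
  rw [h1, Mm_sq_pow N hN k]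
  set c : ℚ := (((N : ℚ) - 1) ^ (2 * k) - 1) / N with hc
  have h2 : (1 + c • Pm N) * Mm N = Mm N + c • (Pm N * Mm N) := by
    rw [add_mul, one_mul, Matrix.smul_mul]
  have h3 : Pm N * Mm N = ((N : ℚ) - 1) • Pm N := by
    rw [Mm, Matrix.mul_sub, PP, PQ, sub_smul, one_smul]
  rw [h2, h3, Matrix.trace_add, Matrix.trace_smul, Matrix.trace_smul, traceP]
  have h4 : Matrix.trace (Mm N) = 0 := by
    rw [Mm, Matrix.trace_sub, traceP, traceQ, sub_self]
  rw [h4, hc]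
  simp only [smul_eq_mul]
  field_simp
  ring
noncomputable def chainM (N : ℕ) : Fin N → List (Fin N) → Fin N → Matrix (Fin N) (Fin N) ℚ
  | a, [], b => soGen N a b
  | a, c :: l, b => soGen N a c * chainM N c l b

lemma sum_chainM (N : ℕ) (n : ℕ) : ∀ a b : Fin N,
    ∑ v : Fin n → Fin N, chainM N a (List.ofFn v) b
      = Matrix.of fun p q => (Mm N ^ (n + 1)) (p, a) (q, b) := by
  induction n with
  | zero =>
    intro a b
    ext p q
    rw [Fintype.sum_unique]
    simp only [List.ofFn_zero, chainM, zero_add, pow_one, Matrix.of_apply, Mm_apply]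
  | succ n ih =>
    intro a b
    rw [← Equiv.sum_comp (Fin.consEquiv fun _ : Fin (n + 1) => Fin N)]
    rw [Fintype.sum_prod_type]
    have step : ∀ (c : Fin N) (w : Fin n → Fin N),
        chainM N a (List.ofFn ((Fin.consEquiv fun _ : Fin (n + 1) => Fin N) (c, w))) b
          = soGen N a c * chainM N c (List.ofFn w) b := by
      intro c w
      have : List.ofFn ((Fin.consEquiv fun _ : Fin (n + 1) => Fin N) (c, w)) = c :: List.ofFn w := by
        rw [List.ofFn_succ]
        simp [Fin.consEquiv]
      rw [this, chainM]
    simp only [step]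
    have inner : ∀ c : Fin N,
        ∑ w : Fin n → Fin N, soGen N a c * chainM N c (List.ofFn w) b
          = soGen N a c * Matrix.of fun p q => (Mm N ^ (n + 1)) (p, c) (q, b) := by
      intro c
      rw [← Finset.mul_sum, ih c b]
    simp only [inner]
    ext p q
    rw [Matrix.sum_apply]
    have rhs : (Mm N ^ (n + 1 + 1)) (p, a) (q, b)
        = ∑ c : Fin N, ∑ r : Fin N, soGen N a c p r * (Mm N ^ (n + 1)) (r, c) (q, b) := by
      rw [pow_succ']
      rw [Matrix.mul_apply, Fintype.sum_prod_type, Finset.sum_comm]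
      simp only [Mm_apply]
    rw [Matrix.of_apply, rhs]
    refine Finset.sum_congr rfl fun c _ => ?_
    rw [Matrix.mul_apply]
    simp only [Matrix.of_apply]

lemma prod_eq_chainM (N : ℕ) (n : ℕ) : ∀ (i : Fin (n + 1) → Fin N) (b : Fin N),
    (List.ofFn fun k : Fin n => soGen N (i k.castSucc) (i k.succ)).prod
        * soGen N (i (Fin.last n)) b
      = chainM N (i 0) (List.ofFn fun k : Fin n => i k.succ) b := by
  induction n with
  | zero =>
    intro i b
    simp only [List.ofFn_zero, List.prod_nil, one_mul, chainM]
    rfl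
  | succ n ih =>
    intro i b
    rw [List.ofFn_succ, List.prod_cons, List.ofFn_succ (f := fun k : Fin (n+1) => i k.succ)]
    rw [chainM]
    have e1 : ∀ k : Fin n, i (k.succ).castSucc = (fun k : Fin (n+1) => i k.succ) k.castSucc := by
      intro k; rw [← Fin.succ_castSucc]
    have e2 : i (Fin.last (n + 1)) = (fun k : Fin (n+1) => i k.succ) (Fin.last n) := by
      rw [← Fin.succ_last]
    simp only [e1]
    rw [e2, mul_assoc]
    rw [ih (fun k : Fin (n+1) => i k.succ) b]
    simp [Fin.castSucc_zero]

lemma soWeight_eq_trace (N n : ℕ) :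
    soWeight N (n + 1) (finRotate (n + 1)) = Matrix.trace (Mm N ^ (n + 1)) := by
  unfold soWeight
  have hlist : ∀ i : Fin (n + 1) → Fin N,
      ((List.finRange (n + 1)).map fun k => soGen N (i k) (i (finRotate (n + 1) k))).prod
        = chainM N (i 0) (List.ofFn fun k : Fin n => i k.succ) (i 0) := by
    intro i
    rw [← List.ofFn_id, List.map_ofFn, List.ofFn_succ', List.prod_concat]
    have h1 : ∀ k : Fin n,
        finRotate (n + 1) (Fin.castSucc k) = k.succ := by
      intro k; rw [finRotate_succ_apply, Fin.coeSucc_eq_succ]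
    have h2 : finRotate (n + 1) (Fin.last n) = 0 := by
      rw [finRotate_succ_apply]
      ext
      simp [Fin.add_def]
    simp only [Function.comp, id_eq, h1, h2]
    exact prod_eq_chainM N n i (i 0)
  rw [Finset.sum_congr rfl fun i _ => hlist i]
  rw [← Equiv.sum_comp (Fin.consEquiv fun _ : Fin (n + 1) => Fin N)]
  rw [Fintype.sum_prod_type]
  have key : ∀ (a : Fin N) (v : Fin n → Fin N),
      chainM N ((Fin.consEquiv fun _ : Fin (n + 1) => Fin N) (a, v) 0)
        (List.ofFn fun k : Fin n => (Fin.consEquiv fun _ : Fin (n + 1) => Fin N) (a, v) k.succ)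
        ((Fin.consEquiv fun _ : Fin (n + 1) => Fin N) (a, v) 0)
      = chainM N a (List.ofFn v) a := by
    intro a v
    simp [Fin.consEquiv]
  simp only [key]
  rw [Matrix.trace_sum]
  have inner : ∀ a : Fin N,
      Matrix.trace (∑ v : Fin n → Fin N, chainM N a (List.ofFn v) a)
        = ∑ p : Fin N, (Mm N ^ (n + 1)) (p, a) (p, a) := by
    intro a
    rw [sum_chainM N n a a]
    simp [Matrix.trace, Matrix.diag]
  rw [Finset.sum_congr rfl fun a _ => inner a]
  rw [Matrix.trace, Fintype.sum_prod_type, Finset.sum_comm]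
  rfl


/-- The value of the trace sum on the standard cycle `(1,2,…,m)` for odd `m ≥ 1`
is `(N-1)^m + 1 - N` (i.e. the so(N) weight system in the standard representation
takes the value `((N-1)^m + 1 - N)/N` on the standard cycle). -/
theorem soWeight_standardCycle_odd (N m : ℕ) (hN : 1 ≤ N) (hm : 1 ≤ m)
    (hmo : Odd m) :
    soWeight N m (finRotate m) = ((N : ℚ) - 1) ^ m + 1 - (N : ℚ) := by
  obtain ⟨k, rfl⟩ := hmo
  rw [soWeight_eq_trace N (2 * k), trace_Mm_odd N hN k]
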